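/- Let α be a type of atoms, let P be a ground program over α in which every rule has a finite positive body, and let F ⊆ F' ⊆ α be two sets of atoms (facts); let F̂ denote the set of fact rules {a. : a ∈ F}. Let Inst^∞(P,F') denote the least fixpoint of the monotone operator R ↦ Inst(P, Heads(R) ∪ F') on subsets of P, where Inst(P, S) = {r ∈ P : B⁺(r) ⊆ S}. Then AS(Inst^∞(P,F') ∪ F̂) = AS(P ∪ F̂), i.e., the overgrounded program computed with the larger set of facts F', together with the facts F, has the same answer sets as the full ground program with the facts F. -/
import Mathlib


structure GroundRule (α : Type*) where
  head : Set α
  posBody : Set α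
  negBody : Set α

namespace GroundRule

variable {α : Type*}

/-- `Heads R` is the set of all head atoms of rules in `R`. -/
def Heads (R : Set (GroundRule α)) : Set α := ⋃ r ∈ R, r.head

/-- `R` body-embeds `r` (written `R ⊢_b r`). -/
def BodyEmbeds (R : Set (GroundRule α)) (r : GroundRule α) : Prop :=
  ∀ a ∈ r.posBody, ∃ r' ∈ R, a ∈ r'.head

/-- `R` embeds `r` (written `R ⊢ r`): either `R` does not body-embed `r`,
or `R` head-embeds `r` (i.e. `r ∈ R`). -/
def Embeds (R : Set (GroundRule α)) (r : GroundRule α) : Prop :=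
  ¬ BodyEmbeds R r ∨ r ∈ R

/-- `E` is an embedding program for the ground program `G`. -/
def IsEmbeddingProgram (G E : Set (GroundRule α)) : Prop :=
  E ⊆ G ∧ ∀ r ∈ G, Embeds E r

/-- The fact rule `a.` for an atom `a`. -/
def factRule (a : α) : GroundRule α := ⟨{a}, ∅, ∅⟩

/-- `factRules F` is the set of fact rules `{a. : a ∈ F}`. -/
def factRules (F : Set α) : Set (GroundRule α) := factRule '' F

/-- The instantiation operator `Inst(P, S) = {r ∈ P : B⁺(r) ⊆ S}`. -/
def Inst (P : Set (GroundRule α)) (S : Set α) : Set (GroundRule α) :=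
  {r ∈ P | r.posBody ⊆ S}

/-- Interpretation `I` satisfies the body of `r`. -/
def SatBody (I : Set α) (r : GroundRule α) : Prop :=
  r.posBody ⊆ I ∧ r.negBody ∩ I = ∅

/-- Interpretation `I` satisfies the rule `r`. -/
def SatRule (I : Set α) (r : GroundRule α) : Prop :=
  ¬ SatBody I r ∨ (r.head ∩ I).Nonempty

/-- `I` is a model of the ground program `G`. -/
def IsModel (I : Set α) (G : Set (GroundRule α)) : Prop :=
  ∀ r ∈ G, SatRule I r

/-- FLP reduct `G^I = {r ∈ G : I ⊨ B(r)}`. -/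
def reduct (G : Set (GroundRule α)) (I : Set α) : Set (GroundRule α) :=
  {r ∈ G | SatBody I r}

/-- `A` is an answer set of `G`: `A` is a model of `G^A` minimal w.r.t. `⊆`. -/
def IsAnswerSet (G : Set (GroundRule α)) (A : Set α) : Prop :=
  IsModel A (reduct G A) ∧ ∀ B, B ⊂ A → ¬ IsModel B (reduct G A)

/-- `AS G` is the set of all answer sets of `G`. -/
def AS (G : Set (GroundRule α)) : Set (Set α) := {A | IsAnswerSet G A}

theorem Heads_mono {R R' : Set (GroundRule α)} (h : R ⊆ R') : Heads R ⊆ Heads R' := by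
  intro a ha
  simp only [Heads, Set.mem_iUnion, exists_prop] at ha ⊢
  obtain ⟨r, hr, har⟩ := ha
  exact ⟨r, h hr, har⟩

/-- The monotone operator `R ↦ Inst(P, Heads(R) ∪ F)`. -/
def InstOp (P : Set (GroundRule α)) (F : Set α) :
    Set (GroundRule α) →o Set (GroundRule α) where
  toFun R := Inst P (Heads R ∪ F)
  monotone' := fun _ _ h _ hr =>
    ⟨hr.1, hr.2.trans (Set.union_subset_union_left F (Heads_mono h))⟩

/-- `Inst^∞(P, F)`: the least fixpoint of `R ↦ Inst(P, Heads(R) ∪ F)`. -/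
def InstInf (P : Set (GroundRule α)) (F : Set α) : Set (GroundRule α) :=
  OrderHom.lfp (InstOp P F)

end GroundRule

open GroundRule

section Aux

variable {α : Type*}

lemma mem_Heads {R : Set (GroundRule α)} {a : α} :
    a ∈ Heads R ↔ ∃ r ∈ R, a ∈ r.head := by
  simp [Heads]

lemma heads_union (R S : Set (GroundRule α)) :
    Heads (R ∪ S) = Heads R ∪ Heads S := by
  ext a; simp [mem_Heads, or_and_right, exists_or]

lemma heads_factRules (F : Set α) : Heads (factRules F) = F := by
  ext a
  simp [mem_Heads, factRules, factRule]

lemma answerSet_subset_heads {G E' : Set (GroundRule α)} {A : Set α}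
    (hemb : ∀ r ∈ G, r.posBody ⊆ Heads E' → r ∈ E')
    (hheads : ∀ r ∈ E', r.head ⊆ Heads E')
    (hA : IsAnswerSet G A) : A ⊆ Heads E' := by
  by_contra hcon
  have hBA : A ∩ Heads E' ⊂ A := by
    constructor
    · exact Set.inter_subset_left
    · intro hsub
      apply hcon
      intro a ha
      exact (hsub ha).2
  apply hA.2 (A ∩ Heads E') hBA
  intro r hr
  by_cases hb : SatBody (A ∩ Heads E') r
  · have hrE : r ∈ E' := hemb r hr.1 (hb.1.trans Set.inter_subset_right)
    have := hA.1 r hr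
    rcases this with hns | ⟨a, ha, haA⟩
    · exact absurd hr.2 hns
    · exact Or.inr ⟨a, ha, haA, hheads r hrE ha⟩
  · exact Or.inl hb

lemma AS_eq_of_embedding {G E' : Set (GroundRule α)}
    (hsub : E' ⊆ G) (hemb : ∀ r ∈ G, r.posBody ⊆ Heads E' → r ∈ E') :
    AS E' = AS G := by
  have hheads : ∀ r ∈ E', r.head ⊆ Heads E' := by
    intro r hr a ha; exact mem_Heads.mpr ⟨r, hr, ha⟩
  ext A
  constructor
  · intro hA
    have hAsub : A ⊆ Heads E' :=
      answerSet_subset_heads (G := E') (fun r hr _ => hr) hheads hA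
    constructor
    · intro r hr
      have hrE : r ∈ E' := hemb r hr.1 (hr.2.1.trans hAsub)
      exact hA.1 r ⟨hrE, hr.2⟩
    · intro B hB hBmod
      apply hA.2 B hB
      intro r hr
      exact hBmod r ⟨hsub hr.1, hr.2⟩
  · intro hA
    have hAsub : A ⊆ Heads E' :=
      answerSet_subset_heads hemb hheads hA
    constructor
    · intro r hr
      exact hA.1 r ⟨hsub hr.1, hr.2⟩
    · intro B hB hBmod
      apply hA.2 B hB
      intro r hr
      by_cases hb : SatBody B r
      · have hrE : r ∈ E' := hemb r hr.1 (hb.1.trans ((hB.subset).trans hAsub))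
        exact hBmod r ⟨hrE, hr.2⟩
      · exact Or.inl hb

end Aux


/-- for `F ⊆ F'`, the overgrounded program `Inst^∞(P,F')`
together with the fact rules `F̂` has the same answer sets as `P ∪ F̂`. -/
theorem overgrounding_equivalence {α : Type*} (P : Set (GroundRule α))
    (hfin : ∀ r ∈ P, r.posBody.Finite)
    (F F' : Set α) (h : F ⊆ F') :
    AS (InstInf P F' ∪ factRules F) = AS (P ∪ factRules F) := by
  set E := InstInf P F' with hE
  have hfix : Inst P (Heads E ∪ F') = E := OrderHom.map_lfp (InstOp P F')
  apply AS_eq_of_embedding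
  · refine Set.union_subset_union_left _ ?_
    intro r hr
    rw [← hfix] at hr
    exact hr.1
  · intro r hr hbody
    rw [heads_union, heads_factRules] at hbody
    rcases hr with hrP | hrF
    · left
      rw [← hfix]
      refine ⟨hrP, hbody.trans ?_⟩
      rintro a (ha | ha)
      · exact Or.inl ha
      · exact Or.inr (h ha)
    · exact Or.inr hrF
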